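/- Let G' be the (h × r) grid and let x = v(i,j), x' = v(i',j') be two vertices of G' with t < i, i' ≤ h − t and t < |j − j'| (separated by at least t+1 columns), where 2t < h. Then for any labels ℓ, ℓ' ∈ {1,...,t}, passing paths through x and x' can be arranged: there exist t vertex-disjoint paths in G', each joining a vertex in the first column to a vertex in the last column, such that the ℓ-th path (in top-to-bottom order at the first column) contains x and the ℓ'-th path contains x'. -/

import Mathlib

/-- The `(h × r)` grid graph on vertex set `Fin h × Fin r`. -/
def gridGraph (h r : ℕ) : SimpleGraph (Fin h × Fin r) :=
  SimpleGraph.fromRel (fun a b =>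
    (a.1 = b.1 ∧ a.2.val + 1 = b.2.val) ∨ (a.2 = b.2 ∧ a.1.val + 1 = b.1.val))

lemma adj_vert (h r : ℕ) (u v : Fin h) (c : Fin r) (huv : u.val + 1 = v.val) :
    (gridGraph h r).Adj (u, c) (v, c) := by
  rw [gridGraph, SimpleGraph.fromRel_adj]
  refine ⟨fun e => by have := congrArg (fun p => p.1.val) e; simp at this; omega,
    Or.inl (Or.inr ⟨rfl, huv⟩)⟩

lemma vert_aux (h r : ℕ) (c : Fin r) (a : Fin h) :
    ∀ (k : ℕ) (b : Fin h), a.val + k = b.val →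
    ∃ W : (gridGraph h r).Walk (a, c) (b, c), W.support.Nodup ∧
      ∀ p, p ∈ W.support ↔ (p.2 = c ∧ a.val ≤ p.1.val ∧ p.1.val ≤ b.val) := by
  intro k
  induction k with
  | zero =>
    intro b hb
    have hab : a = b := Fin.ext (by omega)
    subst hab
    refine ⟨SimpleGraph.Walk.nil, by simp, fun p => ?_⟩
    simp only [SimpleGraph.Walk.support_nil, List.mem_singleton]
    constructor
    · rintro rfl; exact ⟨rfl, le_refl _, le_refl _⟩
    · rintro ⟨h1, h2, h3⟩
      have : p.1 = a := Fin.ext (by omega)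
      exact Prod.ext this h1
  | succ n ih =>
    intro b hb
    obtain ⟨W, h1, h2⟩ := ih ⟨a.val + n, by omega⟩ rfl
    have hadj : (gridGraph h r).Adj (⟨a.val + n, by omega⟩, c) (b, c) :=
      adj_vert h r _ _ c (show a.val + n + 1 = b.val by omega)
    refine ⟨W.concat hadj, ?_, fun p => ?_⟩
    · rw [SimpleGraph.Walk.support_concat, List.nodup_append]
      refine ⟨h1, List.nodup_singleton _, fun p hp q hq hpq => ?_⟩
      subst hpq
      simp only [List.mem_singleton] at hq
      subst hq
      have h5 : b.val ≤ a.val + n := ((h2 _).mp hp).2.2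
      omega
    · rw [SimpleGraph.Walk.support_concat, List.mem_append,
        List.mem_singleton, h2]
      constructor
      · rintro (⟨hc1, hc2, hc3⟩ | rfl)
        · exact ⟨hc1, hc2, by simp at hc3 ⊢; omega⟩
        · exact ⟨rfl, show a.val ≤ b.val by omega, le_refl _⟩
      · rintro ⟨hc1, hc2, hc3⟩
        by_cases hle : p.1.val ≤ a.val + n
        · exact Or.inl ⟨hc1, hc2, hle⟩
        · refine Or.inr (Prod.ext (Fin.ext ?_) hc1)
          show p.1.val = b.val
          omega

lemma adj_horiz (h r : ℕ) (u : Fin h) (c d : Fin r) (hcd : c.val + 1 = d.val) :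
    (gridGraph h r).Adj (u, c) (u, d) := by
  rw [gridGraph, SimpleGraph.fromRel_adj]
  refine ⟨fun e => by have := congrArg (fun p => p.2.val) e; simp at this; omega,
    Or.inl (Or.inl ⟨rfl, hcd⟩)⟩

lemma vertical_walk (h r : ℕ) (c : Fin r) (a b : Fin h) :
    ∃ W : (gridGraph h r).Walk (a, c) (b, c), W.support.Nodup ∧
      ∀ p, p ∈ W.support ↔
        (p.2 = c ∧ min a.val b.val ≤ p.1.val ∧ p.1.val ≤ max a.val b.val) := by
  rcases le_total a.val b.val with hab | hab
  · obtain ⟨W, h1, h2⟩ := vert_aux h r c a (b.val - a.val) b (by omega)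
    refine ⟨W, h1, fun p => ?_⟩
    rw [h2]
    constructor
    · rintro ⟨e1, e2, e3⟩; exact ⟨e1, by omega, by omega⟩
    · rintro ⟨e1, e2, e3⟩; exact ⟨e1, by omega, by omega⟩
  · obtain ⟨W, h1, h2⟩ := vert_aux h r c b (a.val - b.val) a (by omega)
    refine ⟨W.reverse, by simpa using h1, fun p => ?_⟩
    rw [SimpleGraph.Walk.support_reverse, List.mem_reverse, h2]
    constructor
    · rintro ⟨e1, e2, e3⟩; exact ⟨e1, by omega, by omega⟩
    · rintro ⟨e1, e2, e3⟩; exact ⟨e1, by omega, by omega⟩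

lemma buildWalk (h r : ℕ) (f : ℕ → Fin h) :
    ∀ (c : ℕ) (hc : c < r),
    ∃ W : (gridGraph h r).Walk (f 0, ⟨0, by omega⟩) (f c, ⟨c, hc⟩),
      W.support.Nodup ∧
      ∀ p : Fin h × Fin r, p ∈ W.support ↔
        (p.2.val ≤ c ∧ min (f (p.2.val - 1)).val (f p.2.val).val ≤ p.1.val ∧
          p.1.val ≤ max (f (p.2.val - 1)).val (f p.2.val).val) := by
  intro c
  induction c with
  | zero =>
    intro hc
    refine ⟨SimpleGraph.Walk.nil, by simp, fun p => ?_⟩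
    simp only [SimpleGraph.Walk.support_nil, List.mem_singleton]
    constructor
    · rintro rfl
      exact ⟨Nat.le_refl 0, min_le_left _ _, le_max_left _ _⟩
    · rintro ⟨e1, e2, e3⟩
      have hp2 : p.2.val = 0 := by omega
      rw [hp2] at e2 e3
      rw [show (0:ℕ) - 1 = 0 from rfl] at e2 e3
      have : p.2 = (⟨0, by omega⟩ : Fin r) := Fin.ext hp2
      refine Prod.ext (Fin.ext ?_) this
      show p.1.val = (f 0).val
      omega
  | succ n ih =>
    intro hc
    have hn : n < r := by omega
    obtain ⟨W, h1, h2⟩ := ih hn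
    obtain ⟨V, v1, v2⟩ := vertical_walk h r ⟨n + 1, hc⟩ (f n) (f (n + 1))
    have hadj : (gridGraph h r).Adj (f n, ⟨n, hn⟩) (f n, ⟨n + 1, hc⟩) :=
      adj_horiz h r _ _ _ rfl
    refine ⟨W.append (SimpleGraph.Walk.cons hadj V), ?_, fun p => ?_⟩
    · rw [SimpleGraph.Walk.support_append, SimpleGraph.Walk.support_cons,
        List.tail_cons, List.nodup_append]
      refine ⟨h1, v1, fun p hp q hq hpq => ?_⟩
      subst hpq
      have e1 : p.2.val ≤ n := ((h2 p).mp hp).1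
      have e2 : p.2 = (⟨n + 1, hc⟩ : Fin r) := ((v2 p).mp hq).1
      rw [e2] at e1
      simp at e1
    · rw [SimpleGraph.Walk.support_append, SimpleGraph.Walk.support_cons,
        List.tail_cons, List.mem_append, h2, v2]
      constructor
      · rintro (⟨e1, e2, e3⟩ | ⟨e1, e2, e3⟩)
        · exact ⟨by omega, e2, e3⟩
        · have hv : p.2.val = n + 1 := by rw [e1]
          refine ⟨by omega, ?_, ?_⟩ <;> rw [hv] <;> simpa using by omega
      · rintro ⟨e1, e2, e3⟩
        by_cases hle : p.2.val ≤ n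
        · exact Or.inl ⟨hle, e2, e3⟩
        · have hv : p.2.val = n + 1 := by omega
          refine Or.inr ⟨Fin.ext hv, ?_, ?_⟩ <;> rw [hv] at e2 e3 <;>
            simp only [Nat.add_sub_cancel] at e2 e3 <;> omega

lemma grid_aux (h r t : ℕ) (hht : 2 * t < h)
    (x x' : Fin h × Fin r)
    (hx_row : t ≤ x.1.val ∧ x.1.val + t < h)
    (hx'_row : t ≤ x'.1.val ∧ x'.1.val + t < h)
    (hsep : x.2.val + t < x'.2.val)
    (l l' : Fin t) :
    ∃ (a c : Fin t → Fin h × Fin r)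
      (P : ∀ i, (gridGraph h r).Walk (a i) (c i)),
      (∀ i, (a i).2.val = 0) ∧ (∀ i, (c i).2.val = r - 1) ∧
      StrictMono (fun i => (a i).1) ∧
      (∀ i, (P i).IsPath) ∧
      (∀ i j, i ≠ j → ∀ v, v ∈ (P i).support → v ∉ (P j).support) ∧
      x ∈ (P l).support ∧ x' ∈ (P l').support := by
  obtain ⟨hx1, hx2⟩ := hx_row
  obtain ⟨hx1', hx2'⟩ := hx'_row
  have hr : 0 < r := x.2.pos
  have hl := l.isLt
  have hl' := l'.isLt
  set s := x.1.val - l.val with hs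
  set s' := x'.1.val - l'.val with hs'
  set G : Fin t → ℕ → ℕ := fun i c =>
    if c < (if s ≤ s' then x.2.val + t - i.val else x.2.val + 1 + i.val)
    then s + i.val else s' + i.val with hGdef
  have hGh : ∀ (i : Fin t) (c : ℕ), G i c < h := by
    intro i c
    have hi := i.isLt
    simp only [hGdef]
    split_ifs <;> omega
  set F : Fin t → ℕ → Fin h := fun i c => ⟨G i c, hGh i c⟩ with hFdef
  have hFv : ∀ (i : Fin t) (c : ℕ), (F i c).val = G i c := fun _ _ => rfl
  have HW : ∀ i : Fin t,
      ∃ W : (gridGraph h r).Walk (F i 0, ⟨0, by omega⟩) (F i (r - 1), ⟨r - 1, by omega⟩),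
        W.support.Nodup ∧
        ∀ p : Fin h × Fin r, p ∈ W.support ↔
          (p.2.val ≤ r - 1 ∧
            min (F i (p.2.val - 1)).val (F i p.2.val).val ≤ p.1.val ∧
            p.1.val ≤ max (F i (p.2.val - 1)).val (F i p.2.val).val) :=
    fun i => buildWalk h r (F i) (r - 1) (by omega)
  choose W hnd hmem using HW
  have key : ∀ (i k : Fin t), i.val < k.val → ∀ c : ℕ,
      max (G i (c - 1)) (G i c) < min (G k (c - 1)) (G k c) := by
    intro i k hik c
    have hi := i.isLt
    have hk := k.isLt
    simp only [hGdef]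
    split_ifs <;> omega
  refine ⟨fun i => (F i 0, ⟨0, by omega⟩), fun i => (F i (r - 1), ⟨r - 1, by omega⟩), W,
    fun i => rfl, fun i => rfl, ?_, fun i => SimpleGraph.Walk.IsPath.mk' (hnd i), ?_, ?_, ?_⟩
  · intro i k hik
    have hik' : i.val < k.val := hik
    show F i 0 < F k 0
    rw [Fin.lt_def, hFv, hFv]
    have hi := i.isLt
    have hk := k.isLt
    simp only [hGdef]
    split_ifs <;> omega
  · intro i k hik v hvi hvk
    have m1 := (hmem i v).mp hvi
    have m2 := (hmem k v).mp hvk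
    rw [hFv, hFv] at m1 m2
    rcases hik.lt_or_gt with hlt | hlt
    · have := key i k hlt v.2.val
      omega
    · have := key k i hlt v.2.val
      omega
  · have e1 : G l (x.2.val - 1) = x.1.val := by
      simp only [hGdef]; split_ifs <;> omega
    have e2 : G l x.2.val = x.1.val := by
      simp only [hGdef]; split_ifs <;> omega
    refine (hmem l x).mpr ⟨by omega, ?_, ?_⟩ <;> rw [hFv, hFv, e1, e2] <;> omega
  · have e1 : G l' (x'.2.val - 1) = x'.1.val := by
      simp only [hGdef]; split_ifs <;> omega
    have e2 : G l' x'.2.val = x'.1.val := by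
      simp only [hGdef]; split_ifs <;> omega
    refine (hmem l' x').mpr ⟨by omega, ?_, ?_⟩ <;> rw [hFv, hFv, e1, e2] <;> omega

/-- Let `x, x'` be two vertices of the `(h × r)` grid (rows and columns
`0`-indexed) whose rows lie strictly between the top `t` rows and the bottom `t`
rows, separated by at least `t + 1` columns, with `2t < h`. Then for any labels
`ℓ, ℓ' ∈ Fin t` there are `t` vertex-disjoint paths, each joining a vertex of
the first column to a vertex of the last column, listed in top-to-bottom order
of their first-column endpoints, such that the `ℓ`-th path contains `x` and the
`ℓ'`-th path contains `x'`. -/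
theorem grid_paths_through_two_vertices (h r t : ℕ) (hht : 2 * t < h)
    (x x' : Fin h × Fin r)
    (hx_row : t ≤ x.1.val ∧ x.1.val + t < h)
    (hx'_row : t ≤ x'.1.val ∧ x'.1.val + t < h)
    (hsep : (t : ℤ) < |(x.2.val : ℤ) - (x'.2.val : ℤ)|)
    (l l' : Fin t) :
    ∃ (a c : Fin t → Fin h × Fin r)
      (P : ∀ i, (gridGraph h r).Walk (a i) (c i)),
      (∀ i, (a i).2.val = 0) ∧ (∀ i, (c i).2.val = r - 1) ∧
      StrictMono (fun i => (a i).1) ∧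
      (∀ i, (P i).IsPath) ∧
      (∀ i j, i ≠ j → ∀ v, v ∈ (P i).support → v ∉ (P j).support) ∧
      x ∈ (P l).support ∧ x' ∈ (P l').support := by
  rcases abs_cases ((x.2.val : ℤ) - (x'.2.val : ℤ)) with ⟨he, _⟩ | ⟨he, _⟩ <;> rw [he] at hsep
  · -- x'.2 < x.2 : apply the aux lemma with roles swapped
    have hsep' : x'.2.val + t < x.2.val := by omega
    obtain ⟨a, c, P, h1, h2, h3, h4, h5, h6, h7⟩ :=
      grid_aux h r t hht x' x hx'_row hx_row hsep' l' l
    exact ⟨a, c, P, h1, h2, h3, h4, h5, h7, h6⟩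
  · have hsep' : x.2.val + t < x'.2.val := by omega
    exact grid_aux h r t hht x x' hx_row hx'_row hsep' l l'
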